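/- Define the offset estimator θ̂ from a timestamp P̂ ∈ [0, φ) with delay κ ∈ [0, φ/2) by θ̂ = P̂ if P̂ < φ/2 + κ, and θ̂ = P̂ - φ otherwise. If the true offset θ satisfies |θ| < φ/2 and the received timestamp is P̂ = (θ + κ) mod φ, then θ̂ = θ + κ. -/
import Mathlib


theorem pkcos_offset_estimator_correct (φ κ θ : ℝ) (hφ : 0 < φ)
    (hκ0 : 0 ≤ κ) (hκ : κ < φ / 2) (hθ : |θ| < φ / 2)
    (P : ℝ) (hP : P = (θ + κ) - φ * ⌊(θ + κ) / φ⌋)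
    (θhat : ℝ) (hest : θhat = if P < φ / 2 + κ then P else P - φ) :
    θhat = θ + κ := by
  obtain ⟨hθ1, hθ2⟩ := abs_lt.mp hθ
  rcases le_or_gt 0 (θ + κ) with h0 | h0
  · have hfloor : ⌊(θ + κ) / φ⌋ = 0 := by
      apply Int.floor_eq_zero_iff.mpr
      constructor
      · exact div_nonneg h0 hφ.le
      · rw [div_lt_one hφ]; linarith
    rw [hfloor] at hP
    simp at hP
    rw [hest, hP, if_pos (by linarith)]
  · have hfloor : ⌊(θ + κ) / φ⌋ = -1 := by
      have h1 : ((-1 : ℤ) : ℝ) ≤ (θ + κ) / φ := by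
        push_cast; rw [le_div_iff₀ hφ]; nlinarith
      have h2 : (θ + κ) / φ < (-1 : ℤ) + 1 := by
        push_cast; rw [div_lt_iff₀ hφ]; nlinarith
      exact Int.floor_eq_iff.mpr ⟨h1, h2⟩
    rw [hfloor] at hP
    push_cast at hP
    rw [hest, if_neg (by linarith), hP]
    ring
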